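/- arXiv:1810.03347 — 2 statements merged into one kernel-verified Lean document; each statement's English description precedes it below -/
import Mathlib

section
/- Let A and B be real analytic (or C^1) functions on a neighborhood of the origin in R^2 defining the vector field Z = A ∂_x + B ∂_y, and suppose there exist continuous functions f, g with ∂_x A + ∂_y B = f·A + g·B. If Z(0)=0 and the Jacobian matrix of Z at 0 has at least one eigenvalue with nonzero real part (elementary singularity), then the trace of the Jacobian of Z at 0 is zero and the determinant of the Jacobian of Z at 0 is strictly negative; i.e., 0 is a saddle point. -/
open Set

/-- If a planar C¹ vector field `Z = A ∂ₓ + B ∂_y` near the origin satisfies the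
divergence identity `∂ₓA + ∂_yB = f·A + g·B` with `f, g` continuous, vanishes at the
origin, and the origin is an elementary singularity (the Jacobian has an eigenvalue
with nonzero real part), then the trace of the Jacobian at `0` vanishes and its
determinant is strictly negative, i.e. the origin is a saddle point. -/
theorem stmt0 (U : Set (ℝ × ℝ)) (hU : IsOpen U) (h0 : (0 : ℝ × ℝ) ∈ U)
    (A B f g : ℝ × ℝ → ℝ)
    (hA : ContDiffOn ℝ 1 A U) (hB : ContDiffOn ℝ 1 B U)
    (hf : ContinuousOn f U) (hg : ContinuousOn g U)
    (hdiv : ∀ p ∈ U, fderiv ℝ A p (1, 0) + fderiv ℝ B p (0, 1) = f p * A p + g p * B p)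
    (hA0 : A 0 = 0) (hB0 : B 0 = 0)
    (tr det : ℝ)
    (htr : tr = fderiv ℝ A 0 (1, 0) + fderiv ℝ B 0 (0, 1))
    (hdet : det = fderiv ℝ A 0 (1, 0) * fderiv ℝ B 0 (0, 1)
      - fderiv ℝ A 0 (0, 1) * fderiv ℝ B 0 (1, 0))
    (helem : ∃ lam : ℂ, lam ^ 2 - (tr : ℂ) * lam + (det : ℂ) = 0 ∧ lam.re ≠ 0) :
    tr = 0 ∧ det < 0 := by
  have htr0 : tr = 0 := by
    rw [htr, hdiv 0 h0, hA0, hB0]; ring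
  refine ⟨htr0, ?_⟩
  obtain ⟨lam, heq, hre⟩ := helem
  rw [htr0] at heq
  push_cast at heq
  have heq' : lam ^ 2 = -(det : ℂ) := by linear_combination heq
  have h1 := congrArg Complex.re heq'
  have h2 := congrArg Complex.im heq'
  simp [pow_two, Complex.mul_re, Complex.mul_im] at h1 h2
  have hprod : lam.re * lam.im = 0 := by linarith
  have him : lam.im = 0 := (mul_eq_zero.mp hprod).resolve_left hre
  have hpos : 0 < lam.re * lam.re := mul_self_pos.mpr hre
  rw [him] at h1
  nlinarith
end

section
/- Let φ: ℝ₊ × ℝ → ℝ be a function such that φ is C¹ and, for some positive integer k, the map (t, x₁) ↦ φ(x₁, t^k) is analytic. Writing φ(x₁, x₂) = Σ_{i,j} a_{i,j} x₁^i x₂^{j/k} as a convergent Puiseux series on x₂ ≥ 0, the C¹ assumption forces a_{i,j} = 0 unless j = 0 or j ≥ k; consequently ∂φ/∂x₂ is Hölder continuous with exponent 1/k, i.e., φ is of class C^{1,1/k}. -/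
open Set Filter Function

section PuiseuxAux

lemma aux_eq_pow_smul_iterate_dslope {f : ℝ → ℝ} {q : FormalMultilinearSeries ℝ ℝ ℝ}
    (hq : HasFPowerSeriesAt f q 0) (n : ℕ) (h0 : ∀ i < n, q.coeff i = 0) :
    ∀ᶠ z in nhds 0, f z = z ^ n • (Function.swap dslope 0)^[n] f z := by
  have hq2 := hasFPowerSeriesAt_iff'.mp (hq.has_fpower_series_iterate_dslope_fslope n)
  filter_upwards [hq2, hasFPowerSeriesAt_iff'.mp hq] with x hx1 hx2
  simp only [sub_zero] at hx1 hx2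
  obtain ⟨s, hs1, hs2⟩ := hx2.exists_hasSum_smul_of_apply_eq_zero h0
  rw [← hs1]
  congr 1
  simp only [FormalMultilinearSeries.coeff_iterate_fslope] at hx1
  exact (hx1.unique hs2).symm

lemma aux_rpow_sub {c : ℝ} (hc0 : 0 ≤ c) (hc1 : c ≤ 1) {x y : ℝ} (hy : 0 ≤ y) (hxy : y ≤ x) :
    x ^ c - y ^ c ≤ (x - y) ^ c := by
  have hx : 0 ≤ x := hy.trans hxy
  have h := NNReal.rpow_add_le_add_rpow (x - y).toNNReal y.toNNReal hc0 hc1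
  have hsum : (x - y).toNNReal + y.toNNReal = x.toNNReal := by
    rw [← Real.toNNReal_add (by linarith) hy]; ring_nf
  rw [hsum] at h
  have h' : (x.toNNReal : ℝ) ^ c ≤ ((x - y).toNNReal : ℝ) ^ c + (y.toNNReal : ℝ) ^ c := by
    have := (NNReal.coe_le_coe).mpr h
    push_cast [NNReal.coe_rpow] at this ⊢
    exact this
  rw [Real.coe_toNNReal _ hx, Real.coe_toNNReal _ (by linarith), Real.coe_toNNReal _ hy] at h'
  linarith

lemma aux_abs_rpow_sub {c : ℝ} (hc0 : 0 ≤ c) (hc1 : c ≤ 1) {x y : ℝ} (hx : 0 ≤ x) (hy : 0 ≤ y) :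
    |x ^ c - y ^ c| ≤ |x - y| ^ c := by
  rcases le_total y x with h | h
  · rw [abs_of_nonneg (sub_nonneg.2 (Real.rpow_le_rpow hy h hc0)),
      abs_of_nonneg (sub_nonneg.2 h)]
    exact aux_rpow_sub hc0 hc1 hy h
  · rw [abs_sub_comm, abs_sub_comm x,
      abs_of_nonneg (sub_nonneg.2 (Real.rpow_le_rpow hx h hc0)),
      abs_of_nonneg (sub_nonneg.2 h)]
    exact aux_rpow_sub hc0 hc1 hx h

lemma aux_holderOnWith_of_dist {C r : NNReal} {f : ℝ → ℝ} {s : Set ℝ}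
    (h : ∀ x ∈ s, ∀ y ∈ s, dist (f x) (f y) ≤ C * dist x y ^ (r : ℝ)) :
    HolderOnWith C r f s := by
  intro x hx y hy
  rw [edist_dist, edist_dist, ENNReal.ofReal_rpow_of_nonneg dist_nonneg r.coe_nonneg,
    ← ENNReal.ofReal_coe_nnreal, ← ENNReal.ofReal_mul C.coe_nonneg]
  exact ENNReal.ofReal_le_ofReal (h x hx y hy)

lemma partB (ε : ℝ) (hε : 0 < ε) (k : ℕ) (hk : 1 ≤ k) (g : ℝ → ℝ)
    (hg : ContDiffOn ℝ 1 g (Ico 0 ε))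
    (p : FormalMultilinearSeries ℝ ℝ ℝ)
    (hp : HasFPowerSeriesAt (fun t : ℝ => g (t ^ k)) p 0)
    (hA : ∀ j : ℕ, 0 < j → j < k → p.coeff j = 0) :
    ∃ ε' : ℝ, 0 < ε' ∧ ε' ≤ ε ∧ ∃ C : NNReal,
      HolderOnWith C ((k : NNReal))⁻¹ (derivWithin g (Ici 0)) (Icc 0 ε') := by
  have hk0 : k ≠ 0 := by omega
  have hkR : (0:ℝ) < k := by exact_mod_cast Nat.pos_of_ne_zero hk0
  set c : ℝ := (k : ℝ)⁻¹ with hcdef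
  have hc0 : 0 < c := inv_pos.mpr hkR
  have hc1 : c ≤ 1 := by
    rw [hcdef]
    exact inv_le_one_of_one_le₀ (by exact_mod_cast hk)
  set g0 : ℝ := g 0 with hg0
  -- power series for the shifted function
  have hq : HasFPowerSeriesAt (fun z : ℝ => g (z ^ k) - g0)
      (p - constFormalMultilinearSeries ℝ ℝ g0) 0 := hp.sub hasFPowerSeriesAt_const
  set q := p - constFormalMultilinearSeries ℝ ℝ g0 with hqdef
  have hq0 : ∀ i < k, q.coeff i = 0 := by
    intro i hi
    rcases Nat.eq_zero_or_pos i with rfl | hipos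
    · have h0' : q.coeff 0 = g (0 ^ k) - g0 := hq.coeff_zero 1
      simpa [zero_pow hk0, hg0] using h0'
    · have hconst : (constFormalMultilinearSeries ℝ ℝ g0).coeff i = 0 := by
        simp [FormalMultilinearSeries.coeff,
          constFormalMultilinearSeries_apply_of_nonzero (Nat.pos_iff_ne_zero.mp hipos)]
      have hsub : q.coeff i = p.coeff i - (constFormalMultilinearSeries ℝ ℝ g0).coeff i := rfl
      rw [hsub, hconst, hA i hipos hi, sub_zero]
  set H : ℝ → ℝ := (Function.swap dslope 0)^[k] (fun z : ℝ => g (z ^ k) - g0) with hHdef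
  have hHan : AnalyticAt ℝ H 0 := ⟨_, hq.has_fpower_series_iterate_dslope_fslope k⟩
  have hev1 : ∀ᶠ z in nhds (0:ℝ), g (z ^ k) - g0 = z ^ k * H z := by
    filter_upwards [aux_eq_pow_smul_iterate_dslope hq k hq0] with z hz
    simpa [smul_eq_mul] using hz
  obtain ⟨δ₁, hδ₁, hball⟩ := Metric.eventually_nhds_iff.mp (hev1.and hHan.eventually_analyticAt)
  have hHanOn : AnalyticOnNhd ℝ H (Metric.ball (0:ℝ) δ₁) := by
    intro s hs
    exact (hball (by simpa [Real.dist_eq] using hs)).2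
  have hderivan : AnalyticOnNhd ℝ (deriv H) (Metric.ball (0:ℝ) δ₁) := hHanOn.deriv
  set Φ : ℝ → ℝ := fun s => H s + c * (s * deriv H s) with hΦdef
  -- the Puiseux formula for g
  have g_eq : ∀ x ∈ Ioo (0:ℝ) (δ₁ ^ k), g x = g0 + x * H (x ^ c) := by
    intro x hx
    have hx0 : 0 < x := hx.1
    have hs0 : 0 < x ^ c := Real.rpow_pos_of_pos hx0 c
    have hsk : (x ^ c) ^ k = x := Real.rpow_inv_natCast_pow hx0.le hk0
    have hslt : x ^ c < δ₁ := by
      have h2 : x ^ c < (δ₁ ^ k) ^ c := Real.rpow_lt_rpow hx0.le hx.2 hc0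
      rwa [Real.pow_rpow_inv_natCast hδ₁.le hk0] at h2
    have := (hball (show dist (x ^ c) 0 < δ₁ by rw [Real.dist_eq, sub_zero, abs_of_pos hs0]; exact hslt)).1
    rw [hsk] at this
    linarith
  -- the derivative formula on (0, δ₁ ^ k)
  have D_eq : ∀ x ∈ Ioo (0:ℝ) (δ₁ ^ k), derivWithin g (Ici 0) x = Φ (x ^ c) := by
    intro x hx
    have hx0 : 0 < x := hx.1
    have hs0 : 0 < x ^ c := Real.rpow_pos_of_pos hx0 c
    have hslt : x ^ c < δ₁ := by
      have h2 : x ^ c < (δ₁ ^ k) ^ c := Real.rpow_lt_rpow hx0.le hx.2 hc0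
      rwa [Real.pow_rpow_inv_natCast hδ₁.le hk0] at h2
    have hana : AnalyticAt ℝ H (x ^ c) :=
      (hball (show dist (x ^ c) 0 < δ₁ by rw [Real.dist_eq, sub_zero, abs_of_pos hs0]; exact hslt)).2
    have hrpow : HasDerivAt (fun y : ℝ => y ^ c) (c * x ^ (c - 1)) x :=
      Real.hasDerivAt_rpow_const (Or.inl hx0.ne')
    have hcomp : HasDerivAt (fun y : ℝ => H (y ^ c)) (deriv H (x ^ c) * (c * x ^ (c - 1))) x :=
      (hana.differentiableAt.hasDerivAt).comp x hrpow
    have hmul : HasDerivAt (fun y : ℝ => y * H (y ^ c))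
        (1 * H (x ^ c) + x * (deriv H (x ^ c) * (c * x ^ (c - 1)))) x :=
      (hasDerivAt_id x).mul hcomp
    have hψ : HasDerivAt (fun y : ℝ => g0 + y * H (y ^ c))
        (1 * H (x ^ c) + x * (deriv H (x ^ c) * (c * x ^ (c - 1)))) x := hmul.const_add g0
    have hxx : x * x ^ (c - 1) = x ^ c := by
      calc x * x ^ (c - 1) = x ^ (1:ℝ) * x ^ (c - 1) := by rw [Real.rpow_one]
        _ = x ^ (1 + (c - 1)) := (Real.rpow_add hx0 1 (c - 1)).symm
        _ = x ^ c := by ring_nf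
    have hval : 1 * H (x ^ c) + x * (deriv H (x ^ c) * (c * x ^ (c - 1))) = Φ (x ^ c) := by
      rw [hΦdef]
      have : 1 * H (x ^ c) + x * (deriv H (x ^ c) * (c * x ^ (c - 1)))
          = H (x ^ c) + c * ((x * x ^ (c - 1)) * deriv H (x ^ c)) := by ring
      rw [this, hxx]
    rw [hval] at hψ
    have heq : g =ᶠ[nhds x] fun y : ℝ => g0 + y * H (y ^ c) := by
      filter_upwards [isOpen_Ioo.mem_nhds hx] with z hz using g_eq z hz
    have hIci : Ici (0:ℝ) ∈ nhds x := mem_of_superset (Ioi_mem_nhds hx0) Ioi_subset_Ici_self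
    rw [derivWithin_of_mem_nhds hIci, heq.deriv_eq, hψ.deriv]
  -- value at 0
  have hε'' : ∀ᶠ x in nhdsWithin (0:ℝ) (Ioi 0), x < ε :=
    (tendsto_id.mono_left nhdsWithin_le_nhds).eventually_lt_const hε
  have hδ'' : ∀ᶠ x in nhdsWithin (0:ℝ) (Ioi 0), x < δ₁ ^ k :=
    (tendsto_id.mono_left nhdsWithin_le_nhds).eventually_lt_const (pow_pos hδ₁ k)
  have hcont : ContinuousOn (derivWithin g (Ico 0 ε)) (Ico 0 ε) :=
    hg.continuousOn_derivWithin (uniqueDiffOn_Ico 0 ε) le_rfl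
  have hsets : ∀ x ∈ Ico (0:ℝ) ε, derivWithin g (Ico 0 ε) x = derivWithin g (Ici 0) x := by
    intro x hx
    apply derivWithin_congr_set
    filter_upwards [Iio_mem_nhds hx.2] with z hz
    show (z ∈ Ico (0:ℝ) ε) = (z ∈ Ici (0:ℝ))
    simp only [mem_Ico, mem_Ici, eq_iff_iff]
    exact ⟨fun h => h.1, fun h => ⟨h, hz⟩⟩
  have hT1 : Tendsto (derivWithin g (Ici 0)) (nhdsWithin (0:ℝ) (Ioi 0))
      (nhds (derivWithin g (Ici 0) 0)) := by
    have h0 : ContinuousWithinAt (derivWithin g (Ico 0 ε)) (Ico 0 ε) 0 := hcont 0 ⟨le_rfl, hε⟩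
    have hIcoMem : Ico (0:ℝ) ε ∈ nhdsWithin (0:ℝ) (Ioi 0) := by
      filter_upwards [self_mem_nhdsWithin, hε''] with x hx hlt
      exact ⟨le_of_lt hx, hlt⟩
    have hle : nhdsWithin (0:ℝ) (Ioi 0) ≤ nhdsWithin (0:ℝ) (Ico 0 ε) :=
      nhdsWithin_le_iff.mpr hIcoMem
    have h1 := (h0.tendsto).mono_left hle
    rw [hsets 0 ⟨le_rfl, hε⟩] at h1
    apply h1.congr'
    filter_upwards [self_mem_nhdsWithin, hε''] with x hx hlt
    exact hsets x ⟨le_of_lt hx, hlt⟩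
  have hΦcont : ContinuousAt Φ 0 := by
    have h1 : ContinuousAt H 0 := hHan.continuousAt
    have h2 : ContinuousAt (deriv H) 0 :=
      (hderivan 0 (Metric.mem_ball_self hδ₁)).continuousAt
    exact h1.add (continuousAt_const.mul (continuousAt_id.mul h2))
  have hT2 : Tendsto (fun x : ℝ => Φ (x ^ c)) (nhdsWithin (0:ℝ) (Ioi 0)) (nhds (Φ 0)) := by
    have hr : ContinuousAt (fun x : ℝ => x ^ c) 0 :=
      Real.continuousAt_rpow_const 0 c (Or.inr hc0.le)
    have hr2 := hr.tendsto.mono_left (nhdsWithin_le_nhds (s := Ioi (0:ℝ)))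
    rw [Real.zero_rpow hc0.ne'] at hr2
    exact hΦcont.tendsto.comp hr2
  have hT3 : derivWithin g (Ici 0) =ᶠ[nhdsWithin (0:ℝ) (Ioi 0)] fun x => Φ (x ^ c) := by
    filter_upwards [self_mem_nhdsWithin, hδ''] with x hx hlt
    exact D_eq x ⟨hx, hlt⟩
  have D0 : derivWithin g (Ici 0) 0 = Φ 0 := tendsto_nhds_unique (hT1.congr' hT3) hT2
  -- Lipschitz bound for Φ near 0
  have hΦan : AnalyticAt ℝ Φ 0 := by
    have hid : AnalyticAt ℝ (fun s : ℝ => s) 0 := analyticAt_id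
    exact hHan.add (analyticAt_const.mul (hid.mul (hderivan 0 (Metric.mem_ball_self hδ₁))))
  obtain ⟨L, t, htmem, hLip⟩ := (hΦan.contDiffAt (n := 1)).exists_lipschitzOnWith
  obtain ⟨r, hr0, hrball⟩ := Metric.mem_nhds_iff.mp htmem
  refine ⟨min (min (δ₁ ^ k / 2) (ε / 2)) ((r / 2) ^ k), by positivity, ?_, L, ?_⟩
  · exact le_trans (le_trans (min_le_left _ _) (min_le_right _ _)) (by linarith)
  set ε' := min (min (δ₁ ^ k / 2) (ε / 2)) ((r / 2) ^ k) with hε'def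
  have hmem : ∀ z ∈ Icc (0:ℝ) ε', derivWithin g (Ici 0) z = Φ (z ^ c) ∧ z ^ c ∈ t := by
    intro z hz
    rcases eq_or_lt_of_le hz.1 with rfl | hz0
    · refine ⟨by rw [Real.zero_rpow hc0.ne', D0], ?_⟩
      rw [Real.zero_rpow hc0.ne']
      exact hrball (Metric.mem_ball_self hr0)
    · have hzδ : z < δ₁ ^ k :=
        lt_of_le_of_lt (hz.2.trans (le_trans (min_le_left _ _) (min_le_left _ _)))
          (by linarith [pow_pos hδ₁ k])
      refine ⟨D_eq z ⟨hz0, hzδ⟩, ?_⟩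
      apply hrball
      have hzr : z ≤ (r / 2) ^ k := hz.2.trans (min_le_right _ _)
      have : z ^ c ≤ ((r / 2) ^ k) ^ c := Real.rpow_le_rpow hz0.le hzr hc0.le
      rw [Real.pow_rpow_inv_natCast (by linarith) hk0] at this
      have hzc0 : 0 ≤ z ^ c := Real.rpow_nonneg hz0.le c
      simp only [Metric.mem_ball, Real.dist_eq, sub_zero]
      rw [abs_of_nonneg hzc0]
      linarith
  apply aux_holderOnWith_of_dist
  intro x hx y hy
  have hcast : (((k : NNReal)⁻¹ : NNReal) : ℝ) = c := by
    rw [hcdef]; push_cast; ring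
  rw [hcast, (hmem x hx).1, (hmem y hy).1]
  have hd1 : dist (Φ (x ^ c)) (Φ (y ^ c)) ≤ L * dist (x ^ c) (y ^ c) :=
    hLip.dist_le_mul _ (hmem x hx).2 _ (hmem y hy).2
  have hd2 : dist (x ^ c) (y ^ c) ≤ dist x y ^ c := by
    rw [Real.dist_eq, Real.dist_eq]
    exact aux_abs_rpow_sub hc0.le hc1 hx.1 hy.1
  calc dist (Φ (x ^ c)) (Φ (y ^ c)) ≤ L * dist (x ^ c) (y ^ c) := hd1
    _ ≤ L * dist x y ^ c := mul_le_mul_of_nonneg_left hd2 L.coe_nonneg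


lemma partA (ε : ℝ) (hε : 0 < ε) (k : ℕ) (hk : 1 ≤ k) (g : ℝ → ℝ)
    (hg : ContDiffOn ℝ 1 g (Ico 0 ε))
    (p : FormalMultilinearSeries ℝ ℝ ℝ)
    (hp : HasFPowerSeriesAt (fun t : ℝ => g (t ^ k)) p 0) :
    ∀ j : ℕ, 0 < j → j < k → p.coeff j = 0 := by
  have hk0 : k ≠ 0 := by omega
  have hc0 : p.coeff 0 = g 0 := by
    have := hp.coeff_zero 1
    simpa [zero_pow hk0] using this
  -- big-O of g near 0 from the right
  have hdiff : DifferentiableWithinAt ℝ g (Ico 0 ε) 0 :=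
    (hg.differentiableOn one_ne_zero) 0 ⟨le_rfl, hε⟩
  have hbO : (fun x => g x - g 0) =O[nhdsWithin 0 (Ico 0 ε)] fun x => x - 0 :=
    hdiff.isBigO_sub
  have htk0 : Tendsto (fun t : ℝ => t ^ k) (nhdsWithin 0 (Ioi 0)) (nhds 0) := by
    have : Tendsto (fun t : ℝ => t ^ k) (nhds 0) (nhds 0) :=
      (continuous_pow k).tendsto' 0 0 (by simp [zero_pow hk0])
    exact this.mono_left nhdsWithin_le_nhds
  have htk : Tendsto (fun t : ℝ => t ^ k) (nhdsWithin 0 (Ioi 0)) (nhdsWithin 0 (Ico 0 ε)) := by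
    rw [tendsto_nhdsWithin_iff]
    refine ⟨htk0, ?_⟩
    filter_upwards [self_mem_nhdsWithin, htk0.eventually_lt_const hε] with t ht hlt
    exact ⟨pow_nonneg (le_of_lt ht) k, hlt⟩
  have hO1 : (fun t : ℝ => g (t ^ k) - g 0) =O[nhdsWithin 0 (Ioi 0)] fun t => t ^ k := by
    have := hbO.comp_tendsto htk
    simpa [Function.comp_def] using this
  intro j
  induction j using Nat.strong_induction_on with
  | _ j IH =>
  intro hj0 hjk
  -- partial sum identity
  have hps : ∀ t : ℝ, p.partialSum (j + 1) t = g 0 + p.coeff j * t ^ j := by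
    intro t
    rw [FormalMultilinearSeries.partialSum, Finset.sum_range_succ]
    have h1 : ∑ i ∈ Finset.range j, p i (fun _ => t) = g 0 := by
      rw [Finset.sum_eq_single_of_mem 0 (Finset.mem_range.2 hj0)]
      · simp [FormalMultilinearSeries.apply_eq_pow_smul_coeff, hc0]
      · intro i hi hne
        have hz : p.coeff i = 0 :=
          IH i (Finset.mem_range.1 hi) (Nat.pos_of_ne_zero hne)
            (lt_trans (Finset.mem_range.1 hi) hjk)
        simp [FormalMultilinearSeries.apply_eq_pow_smul_coeff, hz]
    rw [h1, FormalMultilinearSeries.apply_eq_pow_smul_coeff, smul_eq_mul]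
    ring
  have hO2 : (fun t : ℝ => g (t ^ k) - p.partialSum (j + 1) t)
      =O[nhdsWithin 0 (Ioi 0)] fun t => t ^ (j + 1) := by
    have h := hp.isBigO_sub_partialSum_pow (j + 1)
    simp only [zero_add] at h
    have h' : (fun y : ℝ => g (y ^ k) - p.partialSum (j + 1) y)
        =O[nhds 0] fun y : ℝ => ‖y ^ (j + 1)‖ := by
      simpa [norm_pow] using h
    exact (h'.of_norm_right).mono nhdsWithin_le_nhds
  have hOkj : (fun t : ℝ => t ^ k) =O[nhdsWithin 0 (Ioi 0)] fun t => t ^ (j + 1) := by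
    apply Asymptotics.IsBigO.of_bound 1
    have hlt0 : Tendsto (fun t : ℝ => t) (nhdsWithin 0 (Ioi 0)) (nhds 0) :=
      tendsto_id.mono_left nhdsWithin_le_nhds
    filter_upwards [self_mem_nhdsWithin, hlt0.eventually_lt_const one_pos] with t ht h1
    have ht0 : (0:ℝ) ≤ t := le_of_lt ht
    rw [one_mul, Real.norm_eq_abs, Real.norm_eq_abs, abs_pow, abs_pow,
      abs_of_nonneg ht0]
    exact pow_le_pow_of_le_one ht0 (le_of_lt h1) (by omega)
  have hO3 : (fun t : ℝ => p.coeff j * t ^ j) =O[nhdsWithin 0 (Ioi 0)] fun t => t ^ (j + 1) := by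
    have heq : (fun t : ℝ => (g (t ^ k) - g 0) - (g (t ^ k) - p.partialSum (j + 1) t))
        = fun t => p.coeff j * t ^ j := by
      funext t; rw [hps t]; ring
    have := (hO1.trans hOkj).sub hO2
    rwa [heq] at this
  obtain ⟨C, hC⟩ := Asymptotics.isBigO_iff.mp hO3
  have hev : ∀ᶠ t in nhdsWithin 0 (Ioi (0:ℝ)), |p.coeff j| ≤ C * t := by
    filter_upwards [hC, self_mem_nhdsWithin] with t h ht
    have ht0 : (0:ℝ) < t := ht
    rw [Real.norm_eq_abs, Real.norm_eq_abs, abs_mul, abs_pow, abs_pow, abs_of_pos ht0,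
      pow_succ] at h
    have hpj : (0:ℝ) < t ^ j := pow_pos ht0 j
    have h' : C * (t ^ j * t) = C * t * t ^ j := by ring
    rw [h'] at h
    exact (mul_le_mul_iff_of_pos_right hpj).mp h
  have htends : Tendsto (fun t : ℝ => C * t) (nhdsWithin 0 (Ioi (0:ℝ))) (nhds 0) := by
    have : Tendsto (fun t : ℝ => C * t) (nhds 0) (nhds (C * 0)) :=
      (continuous_const.mul continuous_id).tendsto 0
    simpa using this.mono_left nhdsWithin_le_nhds
  have habs : |p.coeff j| ≤ 0 := ge_of_tendsto htends hev
  exact abs_nonpos_iff.mp habs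
end PuiseuxAux

/-- Puiseux regularity: if `g` is `C¹` on `[0, ε)` and `t ↦ g(t^k)` is analytic at `0`
for a positive integer `k`, then in the power series `g(t^k) = Σ aⱼ tʲ` the
coefficients `aⱼ` vanish unless `j = 0` or `j ≥ k`, and consequently the derivative
of `g` is `(1/k)`-Hölder continuous near `0` (i.e. `g` is of class `C^{1,1/k}`). -/
theorem stmt8 (ε : ℝ) (hε : 0 < ε) (k : ℕ) (hk : 1 ≤ k) (g : ℝ → ℝ)
    (hg : ContDiffOn ℝ 1 g (Ico 0 ε))
    (han : AnalyticAt ℝ (fun t : ℝ => g (t ^ k)) 0) :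
    (∃ p : FormalMultilinearSeries ℝ ℝ ℝ,
      HasFPowerSeriesAt (fun t : ℝ => g (t ^ k)) p 0 ∧
      ∀ j : ℕ, 0 < j → j < k → p.coeff j = 0) ∧
    ∃ ε' : ℝ, 0 < ε' ∧ ε' ≤ ε ∧ ∃ C : NNReal,
      HolderOnWith C ((k : NNReal))⁻¹ (derivWithin g (Ici 0)) (Icc 0 ε') := by
  obtain ⟨p, hp⟩ := han
  have hA := partA ε hε k hk g hg p hp
  exact ⟨⟨p, hp, hA⟩, partB ε hε k hk g hg p hp hA⟩
end
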